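/- arXiv:2304.06609 — 2 statements merged into one kernel-verified Lean document; each statement's English description precedes it below -/
import Mathlib

section
/- Let M be a finitely generated R-module of dimension d, let Ass(M) = {p_1,…,p_m}, and let 0 = N_1 ∩ … ∩ N_m be an irredundant primary decomposition of 0 in M with M/N_j a p_j-primary module. For each i ∈ {0,…,d}, let a_i be the product of all primes p ∈ Ass(M) with dim(R/p) ≤ i (and a_i = R if there is no such prime). Then for all i ∈ {0,…,d}: δ_i(M) = H^0_{a_i}(M) = ⋂_{j : dim(R/p_j) > i} N_j, where the intersection over the empty index set is taken to be M. -/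
open CategoryTheory

noncomputable section

/-- The (Krull) dimension of a module: the Krull dimension of its support.
The dimension of the zero module is `⊥` (thought of as `-1`). -/
noncomputable def mDim (R : Type) [CommRing R] (M : Type) [AddCommGroup M] [Module R M] :
    WithBot ℕ∞ :=
  Order.krullDim (Module.support R M)

/-- The `i`-th Ext module `Ext_R^i(A, B)` (as a type). -/
noncomputable abbrev extC (R : Type) [CommRing R] (i : ℕ) (A B : Type)
    [AddCommGroup A] [Module R A] [AddCommGroup B] [Module R B] : Type :=
  ↥(((Ext R (ModuleCat R) i).obj (Opposite.op (ModuleCat.of R A))).obj (ModuleCat.of R B))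

/-- The depth of a module `M` with respect to an ideal `I`:
the least `i` such that `Ext_R^i(R/I, M) ≠ 0` (and `⊤` if there is no such `i`,
in particular the depth of the zero module is `⊤ = +∞`). -/
noncomputable def mDepth (R : Type) [CommRing R] (I : Ideal R) (M : Type)
    [AddCommGroup M] [Module R M] : ℕ∞ :=
  sInf {i : ℕ∞ | ∃ j : ℕ, i = j ∧ Nontrivial (extC R j (R ⧸ I) M)}

/-- `M` is a Cohen-Macaulay module (with respect to the (maximal) ideal `I`) if it is
nonzero and its depth equals its dimension. -/
def IsCM (R : Type) [CommRing R] (I : Ideal R) (M : Type) [AddCommGroup M] [Module R M] :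
    Prop :=
  Nontrivial M ∧ (mDepth R I M : WithBot ℕ∞) = mDim R M

/-- The subquotient `N'/N` of a module (most meaningful when `N ≤ N'`). -/
abbrev subQuot (R : Type) [CommRing R] {M : Type} [AddCommGroup M] [Module R M]
    (N N' : Submodule R M) : Type :=
  N' ⧸ (Submodule.comap N'.subtype N)

/-- `F 0 = 0 ⊊ F 1 ⊊ ⋯ ⊊ F r = M` is a sCM filtration: each quotient `F (i+1) / F i`
is Cohen-Macaulay and the dimensions of the quotients are strictly increasing. -/
def IsSCMFil (R : Type) [CommRing R] (I : Ideal R) {M : Type} [AddCommGroup M] [Module R M]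
    (r : ℕ) (F : ℕ → Submodule R M) : Prop :=
  F 0 = ⊥ ∧ F r = ⊤ ∧ (∀ i < r, F i < F (i + 1)) ∧
    (∀ i < r, IsCM R I (subQuot R (F i) (F (i + 1)))) ∧
    (∀ i, i + 1 < r →
      mDim R (subQuot R (F i) (F (i + 1))) < mDim R (subQuot R (F (i + 1)) (F (i + 2))))

/-- `M` is sequentially Cohen-Macaulay if it admits a sCM filtration. -/
def IsSeqCM (R : Type) [CommRing R] (I : Ideal R) (M : Type) [AddCommGroup M] [Module R M] :
    Prop :=
  ∃ (r : ℕ) (F : ℕ → Submodule R M), IsSCMFil R I r F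

/-- `δ_c(M)`: the largest submodule of `M` of dimension at most `c`. -/
noncomputable def deltaSub (R : Type) [CommRing R] (M : Type) [AddCommGroup M] [Module R M]
    (c : ℕ) : Submodule R M :=
  sSup {N : Submodule R M | mDim R ↥N ≤ (c : WithBot ℕ∞)}

/-- `δ_{c-1}(M)`, with `δ_{-1}(M) = 0`. -/
noncomputable def deltaSubPred (R : Type) [CommRing R] (M : Type) [AddCommGroup M] [Module R M] :
    ℕ → Submodule R M
  | 0 => ⊥
  | (c + 1) => deltaSub R M c

/-- `H^0_I(M)`, the `I`-power-torsion submodule of `M`. -/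
noncomputable def tors (R : Type) [CommRing R] (I : Ideal R) (M : Type) [AddCommGroup M]
    [Module R M] : Submodule R M :=
  ⨆ t : ℕ, Submodule.torsionBySet R M ((I ^ t : Ideal R) : Set R)

end

section AuxLemmas

variable {R : Type} [CommRing R] {M : Type} [AddCommGroup M] [Module R M]

lemma mem_tors_of {a : Ideal R} {x : M} (t : ℕ) (h : ∀ r ∈ a ^ t, r • x = 0) :
    x ∈ tors R a M := by
  rw [tors]
  exact le_iSup (fun t => Submodule.torsionBySet R M ((a ^ t : Ideal R) : Set R)) t
    ((Submodule.mem_torsionBySet_iff _ _).mpr fun r => h r.1 r.2)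

lemma annQuot (I : Ideal R) : Module.annihilator R (R ⧸ I) = I := by
  ext r
  rw [Module.mem_annihilator]
  constructor
  · intro h
    have := h (Submodule.Quotient.mk (1 : R))
    rw [← Submodule.Quotient.mk_smul, smul_eq_mul, mul_one, Submodule.Quotient.mk_eq_zero] at this
    exact this
  · intro hr m
    obtain ⟨x, rfl⟩ := Submodule.mkQ_surjective I m
    show r • Submodule.Quotient.mk x = 0
    rw [← Submodule.Quotient.mk_smul, smul_eq_mul, Submodule.Quotient.mk_eq_zero]
    exact Ideal.mul_mem_right x I hr

lemma dimQuot (I : Ideal R) :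
    mDim R (R ⧸ I) = Order.krullDim (PrimeSpectrum.zeroLocus (I : Set R)) := by
  rw [mDim, Module.support_eq_zeroLocus, annQuot]

lemma krullDim_mono {S T : Set (PrimeSpectrum R)} (h : S ⊆ T) :
    Order.krullDim S ≤ Order.krullDim T := by
  apply Order.krullDim_le_of_strictMono (Set.inclusion h)
  intro a b hab
  exact Subtype.mk_lt_mk.mpr (Subtype.coe_lt_coe.mpr hab)

lemma coveringDim {ι : Type*} (s : Finset ι) (P : ι → Ideal R) (S : Set (PrimeSpectrum R))
    (c : ℕ) (hcov : ∀ q ∈ S, ∃ j ∈ s, P j ≤ q.asIdeal)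
    (hdim : ∀ j ∈ s, Order.krullDim (PrimeSpectrum.zeroLocus ((P j : Set R))) ≤ (c : WithBot ℕ∞)) :
    Order.krullDim S ≤ (c : WithBot ℕ∞) := by
  rw [Order.krullDim]
  apply iSup_le
  intro l
  obtain ⟨j, hjs, hj⟩ := hcov l.head.1 l.head.2
  have hall : ∀ k, (l k).1 ∈ PrimeSpectrum.zeroLocus ((P j : Set R)) := by
    intro k
    rw [PrimeSpectrum.mem_zeroLocus]
    refine le_trans (le_trans hj ?_) (le_refl _)
    have : l.head ≤ l k := l.monotone (Fin.zero_le k)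
    exact fun y hy => (this : (l.head : PrimeSpectrum R) ≤ (l k : PrimeSpectrum R)) hy
  let l' : LTSeries (PrimeSpectrum.zeroLocus ((P j : Set R))) :=
    ⟨l.length, fun k => ⟨(l k).1, hall k⟩, fun k =>
      l.step k⟩
  have := Order.LTSeries.length_le_krullDim l'
  exact le_trans this (hdim j hjs)

variable [IsNoetherianRing R]

lemma torsStab [Module.Finite R M] (a : Ideal R) :
    ∃ n : ℕ, 0 < n ∧ tors R a M = Submodule.torsionBySet R M ((a ^ n : Ideal R) : Set R) := by
  have hmono : Monotone (fun t : ℕ => Submodule.torsionBySet R M ((a ^ t : Ideal R) : Set R)) := by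
    intro s t hst
    exact Submodule.torsionBySet_le_torsionBySet_of_subset (Ideal.pow_le_pow_right hst)
  obtain ⟨n, hn⟩ := monotone_stabilizes_iff_noetherian.mpr inferInstance
    ⟨fun t : ℕ => Submodule.torsionBySet R M ((a ^ t : Ideal R) : Set R), hmono⟩
  refine ⟨n + 1, Nat.succ_pos n, ?_⟩
  rw [tors]
  refine le_antisymm (iSup_le fun t => ?_)
    (le_iSup (fun t : ℕ => Submodule.torsionBySet R M ((a ^ t : Ideal R) : Set R)) (n + 1))
  have h1 : Submodule.torsionBySet R M ((a ^ t : Ideal R) : Set R) ≤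
      Submodule.torsionBySet R M ((a ^ (max t (n + 1)) : Ideal R) : Set R) :=
    hmono (le_max_left _ _)
  have h2 := (hn (max t (n + 1)) (le_trans (Nat.le_succ n) (le_max_right _ _))).symm
  have h3 := hn (n + 1) (Nat.le_succ n)
  simp only [OrderHom.coe_mk] at h2 h3
  exact h1.trans (le_of_eq (h2.trans h3))

lemma pow_ann_of_ass_singleton [Module.Finite R M] {P : Ideal R}
    (hA : associatedPrimes R M ⊆ {P}) : ∃ n, P ^ n ≤ Module.annihilator R M := by
  obtain ⟨n, hn0, hT⟩ := torsStab (M := M) P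
  set T := Submodule.torsionBySet R M ((P ^ n : Ideal R) : Set R) with hTdef
  have hmemT : ∀ x ∈ T, ∀ r ∈ P ^ n, r • x = 0 := fun x hx r hr =>
    (Submodule.mem_torsionBySet_iff _ _).mp hx ⟨r, hr⟩
  have habs : ∀ (t : ℕ) (x : M), (∀ r ∈ P ^ t, r • x = 0) → x ∈ T := fun t x h =>
    hT ▸ mem_tors_of t h
  have hTtop : T = ⊤ := by
    by_contra h
    haveI : Nontrivial (M ⧸ T) :=
      Submodule.Quotient.nontrivial_iff.mpr h
    obtain ⟨P', hP'⟩ := associatedPrimes.nonempty R (M ⧸ T)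
    obtain ⟨hP'prime, xb, hxb⟩ := isAssociatedPrime_iff.mp hP'
    obtain ⟨x, rfl⟩ := Submodule.mkQ_surjective T xb
    have hmk : ∀ z : M, T.mkQ z = Submodule.Quotient.mk z := fun _ => rfl
    have hxbmem : ∀ v : R, v ∈ P' ↔ v • (T.mkQ x) = 0 := by
      intro v
      rw [hxb, Submodule.mem_colon_singleton, Submodule.mem_bot]
    have hxb0 : T.mkQ x ≠ 0 := by
      intro h0
      apply hP'prime.ne_top
      rw [hxb, h0]
      exact eq_top_iff.mpr fun r _ => Submodule.mem_colon_singleton.mpr (by simp)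
    have hPP' : ¬P ≤ P' := by
      intro hle
      apply hxb0
      rw [hmk, Submodule.Quotient.mk_eq_zero]
      apply habs (n + 1)
      intro r hr
      have key : P ^ n * P ≤ (R ∙ x).annihilator := by
        rw [Ideal.mul_le]
        intro u hu v hv
        rw [Submodule.mem_annihilator_span_singleton, mul_smul]
        have hvx : v • x ∈ T := by
          rw [← Submodule.Quotient.mk_eq_zero, ← hmk, map_smul]
          exact (hxbmem v).mp (hle hv)
        exact hmemT _ hvx u hu
      rw [← pow_succ] at key
      exact (Submodule.mem_annihilator_span_singleton _ _).mp (key hr)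
    obtain ⟨σ, hσP, hσP'⟩ := SetLike.not_le_iff_exists.mp hPP'
    have hs : σ ^ n ∈ P ^ n := Ideal.pow_mem_pow hσP n
    have hsP' : σ ^ n ∉ P' := fun hcon => hσP' (hP'prime.mem_of_pow_mem n hcon)
    have hassoc : IsAssociatedPrime P' M := by
      refine isAssociatedPrime_iff.mpr ⟨hP'prime, σ ^ n • x, ?_⟩
      ext r
      rw [Submodule.mem_colon_singleton, Submodule.mem_bot]
      constructor
      · intro hr
        have hrx : r • x ∈ T := by
          rw [← Submodule.Quotient.mk_eq_zero, ← hmk, map_smul]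
          exact (hxbmem r).mp hr
        have := hmemT _ hrx (σ ^ n) hs
        rw [smul_comm] at this
        exact this
      · intro hr
        have : (r * σ ^ n) • x = 0 := by rw [mul_smul]; exact hr
        have hmem : r * σ ^ n ∈ P' := by
          rw [hxbmem, ← map_smul, hmk, this]
          exact Submodule.Quotient.mk_zero T
        rcases hP'prime.mem_or_mem hmem with h1 | h1
        · exact h1
        · exact absurd h1 hsP'
    have : P' = P := hA hassoc
    exact hPP' (le_of_eq this.symm)
  refine ⟨n, fun r hr => Module.mem_annihilator.mpr fun x => ?_⟩
  exact hmemT x (hTtop ▸ Submodule.mem_top) r hr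

end AuxLemmas

open IsLocalRing in
/-- (Schenzel)  Let `M` be a finitely generated module of dimension `d` over
a Noetherian local ring `R`, with `Ass(M) = {p_1, …, p_m}` and `0 = N_1 ∩ ⋯ ∩ N_m` an
irredundant primary decomposition of `0` in `M` (`M/N_j` being `p_j`-primary).  Let
`a_i = ∏_{dim R/p ≤ i, p ∈ Ass M} p` (`= R` if there is no such prime).  Then for all
`0 ≤ i ≤ d`, `δ_i(M) = H^0_{a_i}(M) = ⋂_{dim R/p_j > i} N_j` (the empty intersection
being `M`). -/
theorem stmt3 (R : Type) [CommRing R] [IsNoetherianRing R] [IsLocalRing R]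
    (M : Type) [AddCommGroup M] [Module R M] [Module.Finite R M]
    (d : ℕ) (hd : mDim R M = (d : WithBot ℕ∞))
    (m : ℕ) (p : Fin m → Ideal R)
    (hp : Function.Injective p) (hAss : associatedPrimes R M = Set.range p)
    (N : Fin m → Submodule R M)
    (hdec : (⨅ j, N j) = ⊥)
    (hirr : ∀ j : Fin m, (⨅ l ∈ ({j}ᶜ : Set (Fin m)), N l) ≠ ⊥)
    (hprimary : ∀ j : Fin m, associatedPrimes R (M ⧸ N j) = {p j}) :
    ∀ i ≤ d,
      deltaSub R M i =
        tors R (∏ j ∈ Finset.univ.filter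
          (fun j => mDim R (R ⧸ p j) ≤ (i : WithBot ℕ∞)), p j) M ∧
      deltaSub R M i =
        ⨅ j ∈ Finset.univ.filter (fun j => (i : WithBot ℕ∞) < mDim R (R ⧸ p j)), N j := by
  haveI instN : IsNoetherian R M := isNoetherian_of_isNoetherianRing_of_finite R M
  have hprime : ∀ j, (p j).IsPrime := fun j =>
    (AssociatedPrimes.mem_iff.mp (hAss ▸ Set.mem_range_self j)).isPrime
  intro i hi
  set s : Finset (Fin m) :=
    Finset.univ.filter (fun j => mDim R (R ⧸ p j) ≤ (i : WithBot ℕ∞)) with hs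
  set a : Ideal R := ∏ j ∈ s, p j with ha
  set K : Submodule R M :=
    ⨅ j ∈ Finset.univ.filter (fun j => (i : WithBot ℕ∞) < mDim R (R ⧸ p j)), N j with hK
  have hKmem : ∀ x : M, x ∈ K ↔ ∀ j : Fin m, (i : WithBot ℕ∞) < mDim R (R ⧸ p j) → x ∈ N j := by
    intro x
    rw [hK]
    simp [Submodule.mem_iInf]
  -- K ≤ tors
  have hKt : K ≤ tors R a M := by
    have h1 : ∀ j : Fin m, ∃ n : ℕ, j ∈ s → (p j) ^ n ≤ Module.annihilator R (M ⧸ N j) := by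
      intro j
      by_cases hj : j ∈ s
      · obtain ⟨n, hn⟩ := pow_ann_of_ass_singleton (M := M ⧸ N j) (P := p j)
          (by rw [hprimary j])
        exact ⟨n, fun _ => hn⟩
      · exact ⟨0, fun h => absurd h hj⟩
    choose t ht using h1
    intro x hx
    apply mem_tors_of (s.sup t)
    intro r hr
    have hxall : ∀ j, r • x ∈ N j := by
      intro j
      by_cases hj : j ∈ s
      · have haj : a ≤ p j := le_trans Ideal.prod_le_inf (Finset.inf_le hj)
        have hpow : a ^ (s.sup t) ≤ (p j) ^ (t j) :=
          le_trans (Ideal.pow_right_mono haj _) (Ideal.pow_le_pow_right (Finset.le_sup hj))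
        have hrann : r ∈ Module.annihilator R (M ⧸ N j) := ht j hj (hpow hr)
        have h0 := Module.mem_annihilator.mp hrann ((N j).mkQ x)
        rw [← map_smul] at h0
        have : r • x ∈ LinearMap.ker (N j).mkQ := h0
        rwa [Submodule.ker_mkQ] at this
      · have hjbig : (i : WithBot ℕ∞) < mDim R (R ⧸ p j) := by
          rw [hs] at hj
          simp only [Finset.mem_filter, Finset.mem_univ, true_and] at hj
          exact not_le.mp hj
        exact Submodule.smul_mem _ r ((hKmem x).mp hx j hjbig)
    have hbot : r • x ∈ (⨅ j, N j) := Submodule.mem_iInf _ |>.mpr hxall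
    rw [hdec] at hbot
    simpa using hbot
  -- tors ≤ delta
  have htd : tors R a M ≤ deltaSub R M i := by
    apply le_sSup
    show mDim R (tors R a M) ≤ (i : WithBot ℕ∞)
    obtain ⟨n, hn0, hneq⟩ := torsStab (M := M) a
    haveI : Module.Finite R (tors R a M) :=
      Module.Finite.iff_fg.mpr (IsNoetherian.noetherian _)
    have hann : a ^ n ≤ Module.annihilator R (tors R a M) := by
      intro r hr
      rw [Module.mem_annihilator]
      rintro ⟨x, hx⟩
      rw [hneq] at hx
      exact Subtype.ext ((Submodule.mem_torsionBySet_iff _ _).mp hx ⟨r, hr⟩)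
    rw [mDim]
    apply coveringDim s p
    · intro q hq
      have h2 : Module.annihilator R (tors R a M) ≤ q.asIdeal :=
        Module.annihilator_le_of_mem_support hq
      have h3 : a ^ n ≤ q.asIdeal := le_trans hann h2
      haveI := q.isPrime
      have h4 : a ≤ q.asIdeal := (Ideal.IsPrime.pow_le_iff hn0.ne').mp h3
      exact (Ideal.IsPrime.prod_le q.isPrime).mp h4
    · intro j hj
      rw [← dimQuot]
      rw [hs] at hj
      simp only [Finset.mem_filter, Finset.mem_univ, true_and] at hj
      exact hj
  -- delta ≤ K
  have hdK : deltaSub R M i ≤ K := by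
    apply sSup_le
    intro W hW
    have hW : mDim R W ≤ (i : WithBot ℕ∞) := hW
    rw [hK]
    apply le_iInf; intro j; apply le_iInf; intro hj
    simp only [Finset.mem_filter, Finset.mem_univ, true_and] at hj
    by_contra hWN
    obtain ⟨x, hxW, hxN⟩ := SetLike.not_le_iff_exists.mp hWN
    set Q : Submodule R (M ⧸ N j) := Submodule.map (N j).mkQ W with hQ
    haveI : Nontrivial Q := by
      refine ⟨⟨⟨(N j).mkQ x, Submodule.mem_map_of_mem hxW⟩, 0, ?_⟩⟩
      intro hcon
      apply hxN
      have : (N j).mkQ x = 0 := congrArg Subtype.val hcon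
      rwa [← Submodule.ker_mkQ (N j), LinearMap.mem_ker]
    obtain ⟨P, hPass⟩ := associatedPrimes.nonempty R Q
    have hP' : P ∈ associatedPrimes R (M ⧸ N j) :=
      associatedPrimes.subset_of_injective (f := Q.subtype) Subtype.val_injective hPass
    have hPeq : P = p j := by
      rw [hprimary j] at hP'
      exact hP'
    obtain ⟨hPprime, y, hy⟩ := isAssociatedPrime_iff.mp hPass
    have hannP : Module.annihilator R W ≤ P := by
      intro r hr
      rw [hy, Submodule.mem_colon_singleton, Submodule.mem_bot]
      obtain ⟨z, hzW, hzy⟩ := y.2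
      have hrz : r • (⟨z, hzW⟩ : W) = 0 := Module.mem_annihilator.mp hr _
      have hrz' : r • z = 0 := congrArg Subtype.val hrz
      apply Subtype.ext
      show r • (y : M ⧸ N j) = 0
      rw [← hzy, ← map_smul, hrz', map_zero]
    have hsub : PrimeSpectrum.zeroLocus ((p j : Ideal R) : Set R) ⊆ Module.support R W := by
      haveI : Module.Finite R W := Module.Finite.iff_fg.mpr (IsNoetherian.noetherian _)
      rw [Module.support_eq_zeroLocus]
      apply PrimeSpectrum.zeroLocus_anti_mono
      intro u hu
      exact hPeq ▸ hannP hu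
    have hdim2 : mDim R (R ⧸ p j) ≤ mDim R W := by
      rw [dimQuot, mDim]
      exact krullDim_mono hsub
    exact absurd (le_trans hdim2 hW) (not_le.mpr hj)
  exact ⟨le_antisymm (le_trans hdK hKt) htd, le_antisymm hdK (le_trans hKt htd)⟩
end

section
/- Let M be a d-dimensional finitely generated R-module. A filtration of M by submodules 0 ⊆ M_0 ⊆ M_1 ⊆ … ⊆ M_d = M is the dimension filtration of M if and only if Ass(M_i/M_{i-1}) = {p ∈ Ass(M) : dim(R/p) = i} for all i. -/
open CategoryTheory

section Aux
variable {R : Type} [CommRing R] {M N : Type} [AddCommGroup M] [Module R M]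
  [AddCommGroup N] [Module R N]

lemma colon_bot_eq_ann (x : M) :
    (⊥ : Submodule R M).colon {x} = (Submodule.span R {x}).annihilator := by
  ext r
  rw [Submodule.mem_colon_singleton, Submodule.mem_bot, Submodule.mem_annihilator_span_singleton]

lemma isAssociatedPrime_iff_ann [IsNoetherianRing R] {p : Ideal R} :
    IsAssociatedPrime p M ↔ p.IsPrime ∧ ∃ x : M, p = (Submodule.span R {x}).annihilator := by
  simp only [isAssociatedPrime_iff, colon_bot_eq_ann]

lemma krullDim_mono_s5 {α : Type*} [Preorder α] {s t : Set α} (h : s ⊆ t) :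
    Order.krullDim s ≤ Order.krullDim t :=
  Order.krullDim_le_of_strictMono (Set.inclusion h) (fun _ _ hlt => hlt)

lemma mDim_le_of_injective (f : M →ₗ[R] N) (hf : Function.Injective f) :
    mDim R M ≤ mDim R N :=
  krullDim_mono_s5 (Module.support_subset_of_injective f hf)

lemma mDim_le_of_surjective (f : M →ₗ[R] N) (hf : Function.Surjective f) :
    mDim R N ≤ mDim R M :=
  krullDim_mono_s5 (Module.support_subset_of_surjective f hf)

lemma mDim_eq_of_equiv (e : M ≃ₗ[R] N) : mDim R M = mDim R N := by
  unfold mDim; rw [e.support_eq]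

lemma mDim_bot_le (c : WithBot ℕ∞) [Subsingleton M] : mDim R M ≤ c := by
  unfold mDim
  rw [Module.support_eq_empty (R := R) (M := M)]
  rw [show Order.krullDim (∅ : Set (PrimeSpectrum R)) = ⊥ from
    Order.krullDim_eq_bot]
  exact bot_le

lemma support_quotient_ideal (I : Ideal R) :
    Module.support R (R ⧸ I) = PrimeSpectrum.zeroLocus (I : Set R) := by
  rw [Module.support_eq_zeroLocus, Ideal.annihilator_quotient]

lemma mDim_quotient_nonneg (I : Ideal R) [hI : I.IsPrime] : 0 ≤ mDim R (R ⧸ I) := by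
  unfold mDim
  rw [support_quotient_ideal]
  have : (⟨I, hI⟩ : PrimeSpectrum R) ∈ PrimeSpectrum.zeroLocus (I : Set R) :=
    fun x hx => hx
  have : Nonempty (PrimeSpectrum.zeroLocus (I : Set R)) := ⟨⟨_, this⟩⟩
  exact Order.krullDim_nonneg

lemma mDim_quotient_mono {I J : Ideal R} (h : I ≤ J) : mDim R (R ⧸ J) ≤ mDim R (R ⧸ I) := by
  unfold mDim
  rw [support_quotient_ideal, support_quotient_ideal]
  exact krullDim_mono_s5 (PrimeSpectrum.zeroLocus_anti_mono (by exact_mod_cast h))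

lemma mDim_le_iff_supp [Module.Finite R M] {c : WithBot ℕ∞} :
    mDim R M ≤ c ↔ ∀ q ∈ Module.support R M, mDim R (R ⧸ q.asIdeal) ≤ c := by
  constructor
  · intro h q hq
    refine le_trans ?_ h
    unfold mDim
    rw [support_quotient_ideal]
    refine krullDim_mono_s5 ?_
    rw [Module.support_eq_zeroLocus]
    exact PrimeSpectrum.zeroLocus_anti_mono
      (by exact_mod_cast Module.annihilator_le_of_mem_support hq)
  · intro h
    unfold mDim
    unfold Order.krullDim
    refine iSup_le fun p => ?_
    refine le_trans ?_ (h (p.head : PrimeSpectrum R) p.head.2)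
    unfold mDim
    rw [support_quotient_ideal]
    have hmem : ∀ i, (p i).1 ∈ PrimeSpectrum.zeroLocus ((p.head : PrimeSpectrum R).asIdeal : Set R) := by
      intro i
      have : p.head ≤ p i := p.monotone (by
        show (0 : Fin (p.length + 1)) ≤ i
        exact Fin.zero_le i)
      exact (PrimeSpectrum.mem_zeroLocus _ _).2 (by exact_mod_cast this)
    let q : LTSeries (PrimeSpectrum.zeroLocus ((p.head : PrimeSpectrum R).asIdeal : Set R)) :=
      ⟨p.length, fun i => ⟨(p i).1, hmem i⟩, fun i => p.step i⟩
    exact Order.LTSeries.length_le_krullDim q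

section noeth
variable [IsNoetherianRing R] [Module.Finite R M]

instance : IsNoetherian R M := isNoetherian_of_isNoetherianRing_of_finite R M

instance (N : Submodule R M) : Module.Finite R N :=
  Module.Finite.iff_fg.2 (IsNoetherian.noetherian N)

lemma support_sup (N N' : Submodule R M) :
    Module.support R ↥(N ⊔ N') ⊆ Module.support R ↥N ∪ Module.support R ↥N' := by
  have h1 : Module.support R (↥N × ↥N') = Module.support R ↥N ∪ Module.support R ↥N' :=
    Module.support_of_exact (Function.Exact.inl_snd (R := R) (M := ↥N) (N := ↥N'))
      LinearMap.inl_injective (LinearMap.snd_surjective)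
  rw [← h1]
  -- surjection from N × N' onto N ⊔ N'
  let f : (↥N × ↥N') →ₗ[R] M := N.subtype.coprod N'.subtype
  have hrange : LinearMap.range f = N ⊔ N' := by
    rw [LinearMap.range_coprod, Submodule.range_subtype, Submodule.range_subtype]
  let g : (↥N × ↥N') →ₗ[R] ↥(N ⊔ N') :=
    (LinearEquiv.ofEq _ _ hrange).toLinearMap.comp f.rangeRestrict
  have hg : Function.Surjective g := by
    intro x
    obtain ⟨y, hy⟩ := f.surjective_rangeRestrict ((LinearEquiv.ofEq _ _ hrange).symm x)
    exact ⟨y, by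
      simp only [g, LinearMap.coe_comp, Function.comp_apply, LinearEquiv.coe_coe, hy]
      exact (LinearEquiv.ofEq _ _ hrange).apply_symm_apply x⟩
  exact Module.support_subset_of_surjective g hg

lemma mDim_sup_le {N N' : Submodule R M} {c : WithBot ℕ∞}
    (h : mDim R ↥N ≤ c) (h' : mDim R ↥N' ≤ c) : mDim R ↥(N ⊔ N') ≤ c := by
  rw [mDim_le_iff_supp] at h h' ⊢
  intro q hq
  rcases support_sup N N' hq with hq | hq
  · exact h q hq
  · exact h' q hq

end noeth

lemma IsAssociatedPrime.mDim_le [IsNoetherianRing R] {p : Ideal R} (h : IsAssociatedPrime p M) :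
    mDim R (R ⧸ p) ≤ mDim R M := by
  obtain ⟨hp, x, hx⟩ := isAssociatedPrime_iff_ann.1 h
  have hker : LinearMap.ker (LinearMap.toSpanSingleton R M x) = p := by
    ext r
    rw [LinearMap.mem_ker, hx, Submodule.mem_annihilator_span_singleton]
    rfl
  let f : (R ⧸ p) →ₗ[R] M := p.liftQ (LinearMap.toSpanSingleton R M x) hker.ge
  have hf : Function.Injective f := by
    rw [← LinearMap.ker_eq_bot]
    exact Submodule.ker_liftQ_eq_bot _ _ _ hker.le
  exact mDim_le_of_injective f hf

lemma ass_subset_union {R : Type} [CommRing R] [IsNoetherianRing R] {M : Type} [AddCommGroup M] [Module R M]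
    (N : Submodule R M) :
    associatedPrimes R M ⊆ associatedPrimes R ↥N ∪ associatedPrimes R (M ⧸ N) := by
  intro p hpa
  obtain ⟨hp, x, hx⟩ := isAssociatedPrime_iff_ann.1 hpa
  by_cases hcap : ∀ r : R, r • x ∈ N → r • x = 0
  · right
    refine isAssociatedPrime_iff_ann.2 ⟨hp, N.mkQ x, ?_⟩
    ext r
    rw [Submodule.mem_annihilator_span_singleton, ← map_smul, Submodule.mkQ_apply,
      Submodule.Quotient.mk_eq_zero]
    constructor
    · intro hr
      have : r • x = 0 := by
        rw [hx, Submodule.mem_annihilator_span_singleton] at hr; exact hr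
      rw [this]; exact N.zero_mem
    · intro hr
      have := hcap r hr
      rw [hx, Submodule.mem_annihilator_span_singleton]
      exact this
  · left
    push_neg at hcap
    obtain ⟨r, hrN, hrne⟩ := hcap
    have hrp : r ∉ p := by
      intro hrp
      rw [hx, Submodule.mem_annihilator_span_singleton] at hrp
      exact hrne hrp
    refine isAssociatedPrime_iff_ann.2 ⟨hp, ⟨r • x, hrN⟩, ?_⟩
    ext s
    rw [Submodule.mem_annihilator_span_singleton]
    constructor
    · intro hs
      rw [hx, Submodule.mem_annihilator_span_singleton] at hs
      have : s • ((⟨r • x, hrN⟩ : N) : M) = 0 := by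
        show s • (r • x) = 0
        rw [smul_comm, hs, smul_zero]
      exact Subtype.ext this
    · intro hs
      have hs' : s • (r • x) = 0 := congrArg Subtype.val hs
      have hsr : (s * r) • x = 0 := by rw [mul_smul]; exact hs'
      have : s * r ∈ p := by
        rw [hx, Submodule.mem_annihilator_span_singleton]; exact hsr
      rcases hp.mem_or_mem this with h | h
      · exact h
      · exact absurd h hrp

section satAnn
variable (q : PrimeSpectrum R)

/-- The `q`-saturated annihilator of `y`. -/
def satAnn (y : M) : Ideal R where
  carrier := {r | ∃ s ∉ q.asIdeal, (s * r) • y = 0}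
  zero_mem' := ⟨1, q.2.ne_top ∘ (Ideal.eq_top_iff_one _).2, by simp⟩
  add_mem' := by
    rintro r1 r2 ⟨s1, hs1, h1⟩ ⟨s2, hs2, h2⟩
    refine ⟨s1 * s2, fun h => ?_, ?_⟩
    · rcases q.2.mem_or_mem h with h | h
      exacts [hs1 h, hs2 h]
    · have : s1 * s2 * (r1 + r2) = s2 * (s1 * r1) + s1 * (s2 * r2) := by ring
      rw [this, add_smul, mul_smul s2 (s1 * r1), mul_smul s1 (s2 * r2), h1, h2, smul_zero, smul_zero, add_zero]
  smul_mem' := by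
    rintro c r ⟨s, hs, h⟩
    refine ⟨s, hs, ?_⟩
    have : s * (c • r) = c * (s * r) := by simp [smul_eq_mul]; ring
    rw [this, mul_smul, h, smul_zero]

lemma mem_satAnn {y : M} {r : R} :
    r ∈ satAnn q y ↔ ∃ s ∉ q.asIdeal, (s * r) • y = 0 := Iff.rfl

lemma satAnn_ne_top_iff {y : M} :
    satAnn q y ≠ ⊤ ↔ ∀ s ∉ q.asIdeal, s • y ≠ 0 := by
  rw [Ne, Ideal.eq_top_iff_one, mem_satAnn]
  simp only [mul_one]
  push_neg
  rfl

variable [IsNoetherianRing R] [Module.Finite R M]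

lemma exists_satAnn_ne_top (hq : q ∈ Module.support R M) : ∃ y : M, satAnn q y ≠ ⊤ := by
  by_contra hc
  push_neg at hc
  obtain ⟨n, f, hf⟩ := Module.Finite.exists_fin (R := R) (M := M)
  have hsel : ∀ i : Fin n, ∃ s ∉ q.asIdeal, s • f i = 0 := by
    intro i
    have := hc (f i)
    rw [Ideal.eq_top_iff_one, mem_satAnn] at this
    obtain ⟨s, hs, h⟩ := this
    exact ⟨s, hs, by rw [mul_one] at h; exact h⟩
  choose s hs hsf using hsel
  set t : R := ∏ i : Fin n, s i with ht
  have htq : t ∉ q.asIdeal := by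
    have : t ∈ q.asIdeal.primeCompl := Submonoid.prod_mem _ (fun i _ => hs i)
    exact this
  have htann : ∀ x : M, t • x = 0 := by
    intro x
    have hx : x ∈ Submodule.span R (Set.range f) := hf ▸ Submodule.mem_top
    induction hx using Submodule.span_induction with
    | mem x hx =>
      obtain ⟨i, rfl⟩ := hx
      have : t = (∏ j ∈ Finset.univ.erase i, s j) * s i :=
        (Finset.prod_erase_mul _ _ (Finset.mem_univ i)).symm
      rw [this, mul_smul, hsf i, smul_zero]
    | zero => rw [smul_zero]
    | add x y _ _ hx hy => rw [smul_add, hx, hy, add_zero]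
    | smul c x _ hx => rw [smul_comm, hx, smul_zero]
  have : t ∈ Module.annihilator R M := Module.mem_annihilator.2 htann
  exact htq (Module.annihilator_le_of_mem_support hq this)

lemma exists_associated_le (hq : q ∈ Module.support R M) :
    ∃ p ∈ associatedPrimes R M, p ≤ q.asIdeal := by
  classical
  obtain ⟨y₀, hy₀⟩ := exists_satAnn_ne_top q hq
  -- pick a maximal saturated annihilator
  have hmax := (set_has_maximal_iff_noetherian
    (R := R) (M := R)).2 inferInstance
    {I : Submodule R R | ∃ y : M, satAnn q y = I ∧ I ≠ ⊤} ⟨satAnn q y₀, y₀, rfl, hy₀⟩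
  obtain ⟨J, ⟨y, rfl, hJtop⟩, hJmax⟩ := hmax
  -- J ≤ q
  have hJq : satAnn q y ≤ q.asIdeal := by
    intro r hr
    by_contra hrq
    obtain ⟨s, hs, hsr⟩ := hr
    refine hJtop ?_
    rw [Ideal.eq_top_iff_one, mem_satAnn]
    refine ⟨s * r, fun h => ?_, by rwa [mul_one]⟩
    rcases q.2.mem_or_mem h with h | h
    exacts [hs h, hrq h]
  -- J is prime
  have hJprime : (satAnn q y).IsPrime := by
    refine ⟨hJtop, ?_⟩
    intro a b hab
    by_cases hb : b ∈ satAnn q y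
    · exact Or.inr hb
    · left
      have hle : satAnn q y ≤ satAnn q (b • y) := by
        rintro r ⟨s, hs, hsr⟩
        refine ⟨s, hs, ?_⟩
        rw [smul_comm, hsr, smul_zero]
      have hne : satAnn q (b • y) ≠ ⊤ := by
        intro h
        rw [Ideal.eq_top_iff_one, mem_satAnn] at h
        obtain ⟨s, hs, hsb⟩ := h
        refine hb ⟨s, hs, ?_⟩
        rw [mul_one] at hsb
        rw [mul_smul]
        exact hsb
      have heq : satAnn q (b • y) = satAnn q y := by
        by_contra hne'
        exact hJmax (satAnn q (b • y)) ⟨b • y, rfl, hne⟩ (lt_of_le_of_ne hle (Ne.symm hne'))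
      rw [← heq]
      obtain ⟨s, hs, hsab⟩ := hab
      refine ⟨s, hs, ?_⟩
      have : (s * a) • (b • y) = (s * (a * b)) • y := by
        rw [← mul_smul, mul_assoc]
      rw [this, hsab]
  -- produce the element z with annihilator J
  obtain ⟨T, hT⟩ : ∃ T : Finset R, Submodule.span R (T : Set R) = satAnn q y :=
    IsNoetherian.noetherian (satAnn q y)
  have hsel : ∀ r : T, ∃ s ∉ q.asIdeal, (s * (r : R)) • y = 0 := by
    intro r
    have : (r : R) ∈ satAnn q y := hT ▸ Submodule.subset_span r.2
    exact this
  choose s hs hsy using hsel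
  set u : R := ∏ r : T, s r with hu
  have huq : u ∉ q.asIdeal := by
    have : u ∈ q.asIdeal.primeCompl := Submonoid.prod_mem _ (fun r _ => hs r)
    exact this
  set z : M := u • y with hz
  have hann : (Submodule.span R {z}).annihilator = satAnn q y := by
    apply le_antisymm
    · intro r hr
      rw [Submodule.mem_annihilator_span_singleton] at hr
      refine ⟨u, huq, ?_⟩
      rw [mul_comm, mul_smul, ← hz, hr]
    · rw [← hT, Submodule.span_le]
      intro r hr
      rw [SetLike.mem_coe, Submodule.mem_annihilator_span_singleton]
      have hmem : (⟨r, hr⟩ : T) ∈ (Finset.univ : Finset T) := Finset.mem_univ _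
      have hsplit : u = (∏ r' ∈ Finset.univ.erase (⟨r, hr⟩ : T), s r') * s ⟨r, hr⟩ :=
        (Finset.prod_erase_mul _ _ hmem).symm
      have : r • z = ((∏ r' ∈ Finset.univ.erase (⟨r, hr⟩ : T), s r') * (s ⟨r, hr⟩ * r)) • y := by
        rw [hz, ← mul_smul, hsplit]; ring_nf
      rw [this, mul_smul, hsy ⟨r, hr⟩, smul_zero]
  exact ⟨satAnn q y, isAssociatedPrime_iff_ann.2 ⟨hJprime, z, hann.symm⟩, hJq⟩
end satAnn

section noeth2
variable [IsNoetherianRing R] [Module.Finite R M]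

lemma mDim_le_iff_ass {c : WithBot ℕ∞} :
    mDim R M ≤ c ↔ ∀ p ∈ associatedPrimes R M, mDim R (R ⧸ p) ≤ c := by
  constructor
  · intro h p hp
    exact le_trans (IsAssociatedPrime.mDim_le hp) h
  · intro h
    rw [mDim_le_iff_supp]
    intro q hq
    obtain ⟨p, hp, hpq⟩ := exists_associated_le q hq
    exact le_trans (mDim_quotient_mono hpq) (h p hp)

lemma deltaSub_spec (c : ℕ) :
    mDim R ↥(deltaSub R M c) ≤ (c : WithBot ℕ∞) ∧
      ∀ N : Submodule R M, mDim R ↥N ≤ (c : WithBot ℕ∞) → N ≤ deltaSub R M c := by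
  classical
  set S : Set (Submodule R M) := {N : Submodule R M | mDim R ↥N ≤ (c : WithBot ℕ∞)} with hS
  have hbot : (⊥ : Submodule R M) ∈ S := mDim_bot_le _
  obtain ⟨N₀, hN₀S, hN₀max⟩ := (set_has_maximal_iff_noetherian
    (R := R) (M := M)).2 inferInstance S ⟨⊥, hbot⟩
  have hle : ∀ N ∈ S, N ≤ N₀ := by
    intro N hN
    have hsup : N ⊔ N₀ ∈ S := mDim_sup_le hN hN₀S
    have : ¬ N₀ < N ⊔ N₀ := hN₀max _ hsup
    have : N ⊔ N₀ = N₀ := by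
      rcases lt_or_eq_of_le (le_sup_right : N₀ ≤ N ⊔ N₀) with h | h
      · exact absurd h this
      · exact h.symm
    exact le_trans le_sup_left this.le
  have hsSup : deltaSub R M c = N₀ := by
    unfold deltaSub
    exact le_antisymm (sSup_le hle) (le_sSup hN₀S)
  exact ⟨hsSup ▸ hN₀S, fun N hN => hsSup ▸ hle N hN⟩

lemma deltaSub_dim_le (c : ℕ) : mDim R ↥(deltaSub R M c) ≤ (c : WithBot ℕ∞) :=
  (deltaSub_spec c).1

lemma le_deltaSub {c : ℕ} {N : Submodule R M} (h : mDim R ↥N ≤ (c : WithBot ℕ∞)) :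
    N ≤ deltaSub R M c := (deltaSub_spec c).2 N h

lemma mDim_submodule_le (N : Submodule R M) : mDim R ↥N ≤ mDim R M :=
  mDim_le_of_injective N.subtype N.injective_subtype

end noeth2

section subquot
variable (N N' : Submodule R M)

/-- `N'/(N∩N') ≃ (N'+N)/N` -/
noncomputable def subQuotEquiv : subQuot R N N' ≃ₗ[R] ↥(Submodule.map N.mkQ N') := by
  let f : ↥N' →ₗ[R] M ⧸ N := N.mkQ.comp N'.subtype
  have hker : LinearMap.ker f = Submodule.comap N'.subtype N := by
    rw [LinearMap.ker_comp, Submodule.ker_mkQ]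
  have hrange : LinearMap.range f = Submodule.map N.mkQ N' := by
    rw [LinearMap.range_comp, Submodule.range_subtype]
  exact (Submodule.quotEquivOfEq _ _ hker.symm).trans
    (f.quotKerEquivRange.trans (LinearEquiv.ofEq _ _ hrange))

lemma ass_subQuot_eq : associatedPrimes R (subQuot R N N') =
    associatedPrimes R ↥(Submodule.map N.mkQ N') :=
  LinearEquiv.AssociatedPrimes.eq (subQuotEquiv N N')

lemma ass_subQuot_subset : associatedPrimes R (subQuot R N N') ⊆
    associatedPrimes R (M ⧸ N) := by
  rw [ass_subQuot_eq]
  exact associatedPrimes.subset_of_injective (Submodule.map N.mkQ N').injective_subtype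

lemma mDim_subQuot_le : mDim R (subQuot R N N') ≤ mDim R ↥N' :=
  mDim_le_of_surjective (Submodule.comap N'.subtype N).mkQ
    (Submodule.mkQ_surjective _)

lemma ass_quot_subset [IsNoetherianRing R] (h : N ≤ N') :
    associatedPrimes R (M ⧸ N) ⊆
      associatedPrimes R (subQuot R N N') ∪ associatedPrimes R (M ⧸ N') := by
  have h1 := ass_subset_union (R := R) (M := M ⧸ N) (Submodule.map N.mkQ N')
  have h2 : associatedPrimes R ((M ⧸ N) ⧸ Submodule.map N.mkQ N') =
      associatedPrimes R (M ⧸ N') :=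
    LinearEquiv.AssociatedPrimes.eq (Submodule.quotientQuotientEquivQuotient N N' h)
  rw [h2, ← ass_subQuot_eq] at h1
  exact h1

lemma ass_sub_subset [IsNoetherianRing R] (h : N ≤ N') :
    associatedPrimes R ↥N' ⊆
      associatedPrimes R ↥N ∪ associatedPrimes R (subQuot R N N') := by
  have h1 := ass_subset_union (R := R) (M := ↥N') (Submodule.comap N'.subtype N)
  have h2 : associatedPrimes R ↥(Submodule.comap N'.subtype N) = associatedPrimes R ↥N :=
    LinearEquiv.AssociatedPrimes.eq (Submodule.comapSubtypeEquivOfLe h)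
  rw [h2] at h1
  exact h1

lemma ass_subQuot_bot : associatedPrimes R (subQuot R (⊥ : Submodule R M) N') =
    associatedPrimes R ↥N' := by
  refine LinearEquiv.AssociatedPrimes.eq (Submodule.quotEquivOfEqBot _ ?_)
  simp

end subquot

/-- `R∙x ≃ R⧸ann x`. -/
noncomputable def spanSingletonEquiv {x : M} {p : Ideal R}
    (hx : p = (Submodule.span R {x}).annihilator) :
    (R ⧸ p) ≃ₗ[R] ↥(Submodule.span R {x}) := by
  have hker : LinearMap.ker (LinearMap.toSpanSingleton R M x) = p := by
    ext r
    rw [LinearMap.mem_ker, hx, Submodule.mem_annihilator_span_singleton]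
    rfl
  exact (Submodule.quotEquivOfEq _ _ hker.symm).trans
    ((LinearMap.toSpanSingleton R M x).quotKerEquivRange.trans
      (LinearEquiv.ofEq _ _ (LinearMap.span_singleton_eq_range R M x).symm))

lemma ass_span_singleton {x : M} {p : Ideal R} [IsNoetherianRing R] (hp : p.IsPrime)
    (hx : p = (Submodule.span R {x}).annihilator) :
    associatedPrimes R ↥(Submodule.span R {x}) = {p} := by
  rw [← LinearEquiv.AssociatedPrimes.eq (spanSingletonEquiv hx),
    associatedPrimes.eq_singleton_of_isPrimary hp.isPrimary, hp.radical]

section noeth3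
variable [IsNoetherianRing R] [Module.Finite R M]

lemma ass_quot_delta (c : ℕ) :
    associatedPrimes R (M ⧸ deltaSub R M c) =
      {p ∈ associatedPrimes R M | ¬ mDim R (R ⧸ p) ≤ (c : WithBot ℕ∞)} := by
  set δ := deltaSub R M c with hδ
  have hassδ : ∀ p ∈ associatedPrimes R ↥δ, mDim R (R ⧸ p) ≤ (c : WithBot ℕ∞) :=
    fun p hp => le_trans (IsAssociatedPrime.mDim_le hp) (deltaSub_dim_le c)
  ext p
  constructor
  · intro hpa
    obtain ⟨hp, x, hx⟩ := isAssociatedPrime_iff_ann.1 hpa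
    set N' : Submodule R M := Submodule.comap δ.mkQ (Submodule.span R {x}) with hN'
    have hδN' : δ ≤ N' := fun m hm => by
      simp only [hN', Submodule.mem_comap, Submodule.mkQ_apply]
      rw [(Submodule.Quotient.mk_eq_zero (p := δ)).2 hm]
      exact Submodule.zero_mem _
    have hmap : Submodule.map δ.mkQ N' = Submodule.span R {x} :=
      Submodule.map_comap_eq_self (by rw [Submodule.range_mkQ]; exact le_top)
    have hassq : associatedPrimes R (subQuot R δ N') = {p} := by
      rw [ass_subQuot_eq, hmap, ass_span_singleton hp hx]
    have hassN' : associatedPrimes R ↥N' ⊆ associatedPrimes R ↥δ ∪ {p} := by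
      have := ass_sub_subset δ N' hδN'
      rwa [hassq] at this
    have hfalse : ¬ mDim R ↥N' ≤ (c : WithBot ℕ∞) := by
      intro hdim
      have : N' ≤ δ := le_deltaSub hdim
      have hx0 : Submodule.span R {x} = ⊥ := by
        rw [← hmap]
        refine le_antisymm ?_ bot_le
        refine le_trans (Submodule.map_mono this) ?_
        rintro y ⟨m, hm, hy⟩
        have hz : δ.mkQ m = 0 := by rwa [Submodule.mkQ_apply, Submodule.Quotient.mk_eq_zero]
        rw [Submodule.mem_bot, ← hy, hz]
      have : x = 0 := by
        have := Submodule.mem_span_singleton_self (R := R) x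
        rw [hx0] at this
        exact this
      subst this
      apply hp.ne_top
      rw [hx, Submodule.span_zero_singleton, Submodule.annihilator_bot]
    have hpdim : ¬ mDim R (R ⧸ p) ≤ (c : WithBot ℕ∞) := by
      intro hdim
      refine hfalse (mDim_le_iff_ass.2 fun q hq => ?_)
      rcases hassN' hq with h | h
      · exact hassδ q h
      · rw [Set.mem_singleton_iff] at h; subst h; exact hdim
    have hpN' : p ∈ associatedPrimes R ↥N' := by
      by_contra hpN'
      refine hfalse (mDim_le_iff_ass.2 fun q hq => ?_)
      rcases hassN' hq with h | h
      · exact hassδ q h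
      · rw [Set.mem_singleton_iff] at h; subst h; exact absurd hq hpN'
    exact ⟨associatedPrimes.subset_of_injective N'.injective_subtype hpN', hpdim⟩
  · rintro ⟨hp, hdim⟩
    rcases ass_subset_union δ hp with h | h
    · exact absurd (hassδ p h) hdim
    · exact h

end noeth3

lemma wb_cast_le {i j : ℕ} : (i : WithBot ℕ∞) ≤ (j : WithBot ℕ∞) ↔ i ≤ j := Nat.cast_le

lemma wb_eq_succ {a : WithBot ℕ∞} {k : ℕ}
    (h1 : a ≤ ((k + 1 : ℕ) : WithBot ℕ∞)) (h2 : ¬ a ≤ ((k : ℕ) : WithBot ℕ∞)) :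
    a = ((k + 1 : ℕ) : WithBot ℕ∞) := by
  induction a using WithBot.recBotCoe with
  | bot => exact absurd bot_le h2
  | coe b =>
    induction b using ENat.recTopCoe with
    | top => exact absurd h1 (by
        intro h
        rw [show ((k+1:ℕ) : WithBot ℕ∞) = ((((k+1:ℕ)):ℕ∞) : WithBot ℕ∞) by push_cast; rfl,
          WithBot.coe_le_coe] at h
        exact (ENat.coe_lt_top (k+1)).not_ge (by exact_mod_cast h))
    | coe n =>
      have h1' : (n : ℕ) ≤ k + 1 := by exact_mod_cast h1
      have h2' : ¬ (n : ℕ) ≤ k := fun h => h2 (by exact_mod_cast h)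
      have : n = k + 1 := by omega
      subst this; push_cast; rfl

lemma wb_eq_zero {a : WithBot ℕ∞} (h1 : a ≤ ((0 : ℕ) : WithBot ℕ∞)) (h2 : 0 ≤ a) :
    a = ((0 : ℕ) : WithBot ℕ∞) :=
  le_antisymm h1 (by exact_mod_cast h2)


end Aux

/-- `F i / F (i-1)` with the convention `F (-1) = ⊥`. -/
noncomputable def filPred (R : Type) [CommRing R] {M : Type} [AddCommGroup M] [Module R M]
    (F : ℕ → Submodule R M) : ℕ → Submodule R M
  | 0 => ⊥
  | (i + 1) => F i

open IsLocalRing in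
/-- Let `M` be a `d`-dimensional finitely generated module over a Noetherian
local ring `R`.  A filtration `0 ⊆ M_0 ⊆ M_1 ⊆ ⋯ ⊆ M_d = M` is the dimension filtration of
`M` if and only if `Ass(M_i/M_{i-1}) = {p ∈ Ass M | dim R/p = i}` for all `i`. -/
theorem stmt5 (R : Type) [CommRing R] [IsNoetherianRing R] [IsLocalRing R]
    (M : Type) [AddCommGroup M] [Module R M] [Module.Finite R M]
    (d : ℕ) (hd : mDim R M = (d : WithBot ℕ∞))
    (F : ℕ → Submodule R M) (hmono : ∀ i < d, F i ≤ F (i + 1)) (htop : F d = ⊤) :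
    (∀ i ≤ d, F i = deltaSub R M i) ↔
      (∀ i ≤ d,
        associatedPrimes R (subQuot R (filPred R F i) (F i)) =
          {p ∈ associatedPrimes R M | mDim R (R ⧸ p) = (i : WithBot ℕ∞)}) := by

  have hδmono : ∀ k : ℕ, deltaSub R M k ≤ deltaSub R M (k + 1) := fun k =>
    le_deltaSub (le_trans (deltaSub_dim_le k) (wb_cast_le.2 (Nat.le_succ k)))
  constructor
  · intro hF i hi
    have hfp : ∀ j : ℕ, filPred R F (j + 1) = F j := fun j => rfl
    have hfp0 : filPred R F 0 = ⊥ := rfl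
    match i, hi with
    | 0, hi =>
      rw [hfp0, hF 0 hi, ass_subQuot_bot]
      ext p
      constructor
      · intro hp
        have hpM := associatedPrimes.subset_of_injective
          (deltaSub R M 0).injective_subtype hp
        have hdim : mDim R (R ⧸ p) ≤ ((0 : ℕ) : WithBot ℕ∞) :=
          le_trans (IsAssociatedPrime.mDim_le hp) (deltaSub_dim_le 0)
        haveI := hp.isPrime
        exact ⟨hpM, wb_eq_zero hdim (mDim_quotient_nonneg p)⟩
      · rintro ⟨hpM, hdim⟩
        rcases ass_subset_union (deltaSub R M 0) hpM with h | h
        · exact h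
        · rw [ass_quot_delta 0] at h
          exact absurd (le_of_eq hdim) h.2
    | (k + 1), hi =>
      rw [hfp k, hF k (by omega), hF (k + 1) hi]
      ext p
      constructor
      · intro hp
        have h1 : p ∈ associatedPrimes R (M ⧸ deltaSub R M k) := ass_subQuot_subset _ _ hp
        rw [ass_quot_delta k] at h1
        have h2 : mDim R (R ⧸ p) ≤ ((k + 1 : ℕ) : WithBot ℕ∞) :=
          le_trans (IsAssociatedPrime.mDim_le hp)
            (le_trans (mDim_subQuot_le _ _) (deltaSub_dim_le (k + 1)))
        exact ⟨h1.1, wb_eq_succ h2 h1.2⟩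
      · rintro ⟨hpM, hdim⟩
        have hnotk : ¬ mDim R (R ⧸ p) ≤ ((k : ℕ) : WithBot ℕ∞) := by
          rw [hdim]
          intro h
          exact (by omega : ¬ k + 1 ≤ k) (wb_cast_le.1 h)
        have h1 : p ∈ associatedPrimes R (M ⧸ deltaSub R M k) := by
          rw [ass_quot_delta k]; exact ⟨hpM, hnotk⟩
        rcases ass_quot_subset _ _ (hδmono k) h1 with h | h
        · exact h
        · rw [ass_quot_delta (k + 1)] at h
          exact absurd (le_of_eq hdim) h.2
  · intro hAss
    have key : ∀ k i, i + k = d → ∀ q ∈ associatedPrimes R (M ⧸ F i),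
        ∃ j : ℕ, i < j ∧ j ≤ d ∧ mDim R (R ⧸ q) = (j : WithBot ℕ∞) := by
      intro k
      induction k with
      | zero =>
        intro i hik q hq
        have hsub : Subsingleton (M ⧸ F i) := by
          rw [Submodule.Quotient.subsingleton_iff, show i = d by omega]
          exact htop
        rw [associatedPrimes.eq_empty_of_subsingleton] at hq
        exact absurd hq (Set.notMem_empty q)
      | succ n ih =>
        intro i hik q hq
        rcases ass_quot_subset (F i) (F (i + 1)) (hmono i (by omega)) hq with h | h
        · have hA := hAss (i + 1) (by omega)
          have h' : q ∈ {p ∈ associatedPrimes R M |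
              mDim R (R ⧸ p) = ((i + 1 : ℕ) : WithBot ℕ∞)} := by
            rw [← hA]
            exact h
          exact ⟨i + 1, by omega, by omega, h'.2⟩
        · obtain ⟨j, hj1, hj2, hj3⟩ := ih (i + 1) (by omega) q h
          exact ⟨j, by omega, hj2, hj3⟩
    have hge : ∀ i, i ≤ d → deltaSub R M i ≤ F i := by
      intro i hi
      by_contra hcon
      set K := Submodule.map (F i).mkQ (deltaSub R M i) with hK
      have hKne : K ≠ ⊥ := by
        intro h0
        apply hcon
        intro x hx
        have hxK : (F i).mkQ x ∈ K := ⟨x, hx, rfl⟩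
        rw [h0, Submodule.mem_bot] at hxK
        rwa [Submodule.mkQ_apply, Submodule.Quotient.mk_eq_zero] at hxK
      haveI : Nontrivial ↥K := Submodule.nontrivial_iff_ne_bot.2 hKne
      obtain ⟨q, hq⟩ := associatedPrimes.nonempty R ↥K
      have hqQ : q ∈ associatedPrimes R (M ⧸ F i) :=
        associatedPrimes.subset_of_injective K.injective_subtype hq
      obtain ⟨j, hij, hjd, hdim⟩ := key (d - i) i (by omega) q hqQ
      have hdimle : mDim R (R ⧸ q) ≤ (i : WithBot ℕ∞) := by
        refine le_trans (IsAssociatedPrime.mDim_le hq) ?_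
        have hKdim : mDim R ↥K = mDim R (subQuot R (F i) (deltaSub R M i)) :=
          (mDim_eq_of_equiv (subQuotEquiv (F i) (deltaSub R M i))).symm
        rw [hKdim]
        exact le_trans (mDim_subQuot_le _ _) (deltaSub_dim_le i)
      rw [hdim] at hdimle
      exact (by omega : ¬ j ≤ i) (wb_cast_le.1 hdimle)
    intro i
    induction i with
    | zero =>
      intro hi
      refine le_antisymm (le_deltaSub ?_) (hge 0 hi)
      refine mDim_le_iff_ass.2 fun p hp => ?_
      have hA := hAss 0 (Nat.zero_le d)
      rw [show filPred R F 0 = ⊥ from rfl, ass_subQuot_bot] at hA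
      rw [hA] at hp
      exact le_of_eq hp.2
    | succ k ih =>
      intro hi
      refine le_antisymm (le_deltaSub ?_) (hge (k + 1) hi)
      refine mDim_le_iff_ass.2 fun p hp => ?_
      rcases ass_sub_subset (F k) (F (k + 1)) (hmono k (by omega)) hp with h | h
      · rw [ih (by omega)] at h
        exact le_trans (le_trans (IsAssociatedPrime.mDim_le h) (deltaSub_dim_le k))
          (wb_cast_le.2 (by omega))
      · have hA := hAss (k + 1) hi
        rw [show filPred R F (k + 1) = F k from rfl] at hA
        rw [hA] at h
        exact le_of_eq h.2
end
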